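/- arXiv:2308.10081 — 3 statements merged into one kernel-verified Lean document; each statement's English description precedes it below -/
import Mathlib

section
/- Fix d ∈ ℕ and j. Let ρ_ref : ℝ^d → ℝ be continuously differentiable, let a_j ∈ ℝ^d and let A_j be a symmetric positive definite d×d real matrix. For t ∈ [0,1] let A_{j,t} := t A_j + (1−t) Id_d (which is symmetric positive definite, hence invertible), ρ_{j,t}(x) := |det A_{j,t}|⁻¹ ρ_ref(A_{j,t}⁻¹(x − t a_j)) and v_{j,t}(x) := a_j + (A_j − Id_d) A_{j,t}⁻¹(x − t a_j). Then the family (ρ_{j,t}) solves the continuity equation with velocity field v_{j,t}: for every t ∈ [0,1] and every x ∈ ℝ^d, (∂/∂t) ρ_{j,t}(x) + div_x (ρ_{j,t} v_{j,t})(x) = 0, where div_x F(x) := Σ_{i=1}^d ∂F_i/∂x_i (x) denotes the spatial divergence of the vector field F(x) = ρ_{j,t}(x) v_{j,t}(x). -/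
open MeasureTheory Matrix

attribute [local instance] Matrix.linftyOpNormedRing Matrix.linftyOpNormedAlgebra

/-- Each mixture component `ρ_{j,t}(x) = |det A_{j,t}|⁻¹ ρ_ref (A_{j,t}⁻¹ (x - t a_j))`
solves the continuity equation `∂ₜ ρ_{j,t} + div_x (ρ_{j,t} v_{j,t}) = 0` with velocity
field `v_{j,t}(x) = a_j + (A_j - Id) A_{j,t}⁻¹ (x - t a_j)`, where
`A_{j,t} = t A_j + (1-t) Id`. -/
theorem component_continuity_equation
    (d : ℕ) (ρref : (Fin d → ℝ) → ℝ) (hρref : ContDiff ℝ 1 ρref)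
    (a : Fin d → ℝ) (A : Matrix (Fin d) (Fin d) ℝ) (hA : A.PosDef) :
    ∀ t ∈ Set.Icc (0 : ℝ) 1, ∀ x : Fin d → ℝ,
      deriv (fun s : ℝ =>
          |((s • A + (1 - s) • (1 : Matrix (Fin d) (Fin d) ℝ)).det)|⁻¹ *
            ρref ((s • A + (1 - s) • (1 : Matrix (Fin d) (Fin d) ℝ))⁻¹.mulVec (x - s • a))) t
        + ∑ i : Fin d,
            fderiv ℝ (fun y : Fin d → ℝ =>
                (|((t • A + (1 - t) • (1 : Matrix (Fin d) (Fin d) ℝ)).det)|⁻¹ *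
                  ρref ((t • A + (1 - t) • (1 : Matrix (Fin d) (Fin d) ℝ))⁻¹.mulVec (y - t • a)))
                * (a + (A - 1).mulVec
                    ((t • A + (1 - t) • (1 : Matrix (Fin d) (Fin d) ℝ))⁻¹.mulVec (y - t • a))) i)
              x (Pi.single i 1)
        = 0 := by
  intro t ht x
  obtain ⟨ht0, ht1⟩ := ht
  -- positive definiteness of the interpolation matrix
  have hBpd : (t • A + (1 - t) • (1 : Matrix (Fin d) (Fin d) ℝ)).PosDef := by
    rcases eq_or_lt_of_le ht0 with h0 | h0
    · simpa [← h0] using Matrix.PosDef.one (n := Fin d) (R := ℝ)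
    · have hsmul : (t • A).PosDef := by
        refine ⟨?_, fun y hy => ?_⟩
        · show (t • A)ᴴ = t • A
          rw [conjTranspose_smul, hA.1.eq]; simp
        · exact (hA.smul h0).2 hy
      have hsemi : ((1 - t) • (1 : Matrix (Fin d) (Fin d) ℝ)).PosSemidef := by
        refine ⟨?_, fun y => ?_⟩
        · show ((1 - t) • (1 : Matrix (Fin d) (Fin d) ℝ))ᴴ = _
          rw [conjTranspose_smul]; simp
        · exact (Matrix.PosSemidef.one.smul (by linarith : (0:ℝ) ≤ 1 - t)).2 y
      exact hsmul.add_posSemidef hsemi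
  set M : Matrix (Fin d) (Fin d) ℝ := A - 1 with hM
  have hAt : ∀ s : ℝ, s • A + (1 - s) • (1 : Matrix (Fin d) (Fin d) ℝ) = 1 + s • M := by
    intro s; rw [hM]; module
  rw [hAt t] at hBpd
  simp only [hAt]
  set B : Matrix (Fin d) (Fin d) ℝ := 1 + t • M with hBdef
  have hdet : 0 < B.det := hBpd.det_pos
  have hBunit : IsUnit B := (Matrix.isUnit_iff_isUnit_det B).mpr (isUnit_iff_ne_zero.mpr hdet.ne')
  set b : Matrix (Fin d) (Fin d) ℝ := B⁻¹ with hbdef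
  have hBb : B * b = 1 := mul_nonsing_inv B ((Matrix.isUnit_iff_isUnit_det B).mp hBunit)
  have hRI : Ring.inverse B = b := (Matrix.nonsing_inv_eq_ringInverse B).symm
  set g : Fin d → ℝ := b *ᵥ (x - t • a) with hg
  set v : Fin d → ℝ := a + M *ᵥ g with hv
  set C : ℝ := (B.det)⁻¹ with hC
  set Dρ : (Fin d → ℝ) →L[ℝ] ℝ := fderiv ℝ ρref g with hDρ
  set w : Fin d → ℝ := (-(b * M * b)) *ᵥ (x - t • a) - b *ᵥ a with hw
  rw [abs_of_pos hdet]
  -- derivative of the matrix path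
  have hpath : HasDerivAt (fun s : ℝ => 1 + s • M) M t := by
    exact (((hasDerivAt_id t).smul_const M).const_add (1 : Matrix (Fin d) (Fin d) ℝ)).congr_deriv (by simp)
  -- derivative of the determinant
  have hdetDeriv : HasDerivAt (fun s : ℝ => (1 + s • M).det) (B.det * trace (b * M)) t := by
    have key : ∀ s : ℝ, 1 + s • M = B * (1 + (s - t) • (b * M)) := by
      intro s
      rw [mul_add, mul_one, mul_smul_comm, ← mul_assoc, hBb, one_mul, hBdef]
      module
    obtain ⟨q, hq⟩ : ∃ q : Polynomial ℝ, ∀ r : ℝ,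
        (1 + r • (b * M)).det = 1 + trace (b * M) * r + q.eval r * r ^ 2 :=
      ⟨_, fun r => Matrix.det_one_add_smul r (b * M)⟩
    have hfun : (fun s : ℝ => (1 + s • M).det)
        = fun s : ℝ => B.det * (1 + trace (b * M) * (s - t) + q.eval (s - t) * (s - t) ^ 2) := by
      funext s
      rw [key s, det_mul, hq]
    rw [hfun]
    have h1 : HasDerivAt (fun s : ℝ => s - t) 1 t := (hasDerivAt_id t).sub_const t
    have h2 : HasDerivAt (fun s : ℝ => q.eval (s - t)) (q.derivative.eval 0) t := by
      have hcq := HasDerivAt.comp (h := fun s : ℝ => s - t) t (q.hasDerivAt (t - t)) h1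
      rw [sub_self] at hcq
      simpa [Function.comp_def] using hcq
    have h3 : HasDerivAt (fun s : ℝ => (s - t) ^ 2) 0 t := by
      simpa [Pi.pow_def] using h1.pow 2
    have h4 := (((hasDerivAt_const t (1 : ℝ)).fun_add (h1.const_mul (trace (b * M)))).fun_add
      (h2.fun_mul h3)).const_mul B.det
    refine h4.congr_deriv ?_
    simp
  -- derivative of the matrix inverse
  have hinv : HasDerivAt (fun s : ℝ => Ring.inverse (1 + s • M)) (-(b * M * b)) t := by
    have hu := hasFDerivAt_ringInverse (𝕜 := ℝ) hBunit.unit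
    rw [hBunit.unit_spec] at hu
    have hcoeinv : ((hBunit.unit⁻¹ : (Matrix (Fin d) (Fin d) ℝ)ˣ) : Matrix (Fin d) (Fin d) ℝ)
        = b := by
      rw [← Ring.inverse_unit hBunit.unit, hBunit.unit_spec, hRI]
    have := hu.comp_hasDerivAt t hpath
    simp [hcoeinv, Function.comp_def] at this
    exact this
  -- entrywise derivative of the inverse
  have hentry : ∀ i k : Fin d,
      HasDerivAt (fun s : ℝ => Ring.inverse (1 + s • M) i k) ((-(b * M * b)) i k) t := by
    intro i k
    have := ((Matrix.entryLinearMap ℝ ℝ i k).toContinuousLinearMap).hasFDerivAt.comp_hasDerivAt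
      t hinv
    exact this
  -- derivative of the transported point
  have hG : HasDerivAt (fun s : ℝ => Ring.inverse (1 + s • M) *ᵥ (x - s • a)) w t := by
    rw [hasDerivAt_pi]
    intro i
    have hsum : HasDerivAt
        (fun s : ℝ => ∑ k, Ring.inverse (1 + s • M) i k * (x k - s * a k))
        (∑ k, ((-(b * M * b)) i k * (x k - t * a k) + Ring.inverse B i k * -(1 * a k))) t := by
      refine HasDerivAt.fun_sum fun k _ => ?_
      exact (hentry i k).mul (((hasDerivAt_id t).mul_const (a k)).const_sub (x k))
    have heq : (fun s : ℝ => (Ring.inverse (1 + s • M) *ᵥ (x - s • a)) i)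
        = fun s : ℝ => ∑ k, Ring.inverse (1 + s • M) i k * (x k - s * a k) := by
      funext s
      simp [Matrix.mulVec, dotProduct]
    rw [heq]
    refine hsum.congr_deriv ?_
    symm
    rw [hw, hRI]
    simp only [Pi.sub_apply, Matrix.neg_mulVec, Pi.neg_apply, Matrix.mulVec, dotProduct,
      Pi.smul_apply, Pi.add_apply, smul_eq_mul, Matrix.neg_apply, neg_mul, one_mul, mul_neg,
      Finset.sum_add_distrib, sub_eq_add_neg, ← Finset.sum_neg_distrib]
  -- derivative of the composed density
  have hcomp : HasDerivAt
      (fun s : ℝ => ρref (Ring.inverse (1 + s • M) *ᵥ (x - s • a))) (Dρ w) t := by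
    have hpt : Ring.inverse (1 + t • M) *ᵥ (x - t • a) = g := by
      rw [← hBdef, hRI, hg]
    have hd := (hρref.differentiable one_ne_zero
      (Ring.inverse (1 + t • M) *ᵥ (x - t • a))).hasFDerivAt
    have hcompp := hd.comp_hasDerivAt t hG
    rw [hpt] at hcompp
    exact hcompp
  have hdetinv : HasDerivAt (fun s : ℝ => ((1 + s • M).det)⁻¹)
      (-(B.det * trace (b * M)) / B.det ^ 2) t := by
    have := hdetDeriv.fun_inv (x := t) (by rw [← hBdef]; exact hdet.ne')
    simpa [← hBdef] using this
  have hF1 : HasDerivAt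
      (fun s : ℝ => ((1 + s • M).det)⁻¹ * ρref (Ring.inverse (1 + s • M) *ᵥ (x - s • a)))
      ((-(B.det * trace (b * M)) / B.det ^ 2) * ρref g + C * Dρ w) t := by
    have := hdetinv.fun_mul hcomp
    have hpt : Ring.inverse (1 + t • M) *ᵥ (x - t • a) = g := by
      rw [← hBdef, hRI, hg]
    rw [hpt, ← hBdef, ← hC] at this
    exact this
  -- identify the time derivative
  have hderiv_eq : deriv (fun s : ℝ =>
      |((1 + s • M).det)|⁻¹ * ρref ((1 + s • M)⁻¹ *ᵥ (x - s • a))) t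
      = (-(B.det * trace (b * M)) / B.det ^ 2) * ρref g + C * Dρ w := by
    have hcont : Continuous fun s : ℝ => (1 + s • M).det :=
      Continuous.matrix_det (continuous_const.add (continuous_id.smul continuous_const))
    have hpos : ∀ᶠ s : ℝ in nhds t, 0 < (1 + s • M).det := by
      have := hcont.continuousAt (x := t)
      exact this.eventually (eventually_gt_nhds hdet)
    have hEE : (fun s : ℝ => |((1 + s • M).det)|⁻¹ * ρref ((1 + s • M)⁻¹ *ᵥ (x - s • a)))
        =ᶠ[nhds t] fun s : ℝ =>
          ((1 + s • M).det)⁻¹ * ρref (Ring.inverse (1 + s • M) *ᵥ (x - s • a)) := by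
      filter_upwards [hpos] with s hs
      rw [abs_of_pos hs, Matrix.nonsing_inv_eq_ringInverse]
    rw [hEE.deriv_eq, hF1.deriv]
  rw [hderiv_eq]
  -- spatial derivatives
  have hbmul : HasFDerivAt (fun y : Fin d → ℝ => b *ᵥ (y - t • a))
      ((Matrix.mulVecLin b).toContinuousLinearMap) x := by
    have h0 := ((Matrix.mulVecLin b).toContinuousLinearMap).hasFDerivAt.comp x
      ((hasFDerivAt_id x).sub_const (t • a))
    simpa using h0
  have hρfd : HasFDerivAt (fun y : Fin d → ℝ => B.det⁻¹ * ρref (b *ᵥ (y - t • a)))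
      (B.det⁻¹ • (Dρ.comp (Matrix.mulVecLin b).toContinuousLinearMap)) x :=
    ((hρref.differentiable one_ne_zero g).hasFDerivAt.comp x hbmul).const_mul B.det⁻¹
  have hvfd : ∀ i : Fin d, HasFDerivAt (fun y : Fin d → ℝ => (a + M *ᵥ b *ᵥ (y - t • a)) i)
      ((ContinuousLinearMap.proj i).comp (Matrix.mulVecLin (M * b)).toContinuousLinearMap) x := by
    intro i
    have h0 := ((((ContinuousLinearMap.proj (R := ℝ) (φ := fun _ : Fin d => ℝ) i)).comp
        ((Matrix.mulVecLin (M * b)).toContinuousLinearMap)).hasFDerivAt.comp x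
      ((hasFDerivAt_id x).sub_const (t • a))).const_add (a i)
    have heq : (fun y : Fin d → ℝ => (a + M *ᵥ b *ᵥ (y - t • a)) i)
        = fun y : Fin d → ℝ => a i + ((ContinuousLinearMap.proj
            (R := ℝ) (φ := fun _ : Fin d => ℝ) i).comp
            ((Matrix.mulVecLin (M * b)).toContinuousLinearMap)) (y - t • a) := by
      funext y
      simp [Matrix.mulVec_mulVec]
    rw [heq]
    simpa using h0
  have hspat : ∀ i : Fin d,
      fderiv ℝ (fun y : Fin d → ℝ =>
        B.det⁻¹ * ρref (b *ᵥ (y - t • a)) * (a + M *ᵥ b *ᵥ (y - t • a)) i) x (Pi.single i 1)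
      = B.det⁻¹ * ρref g * (M * b) i i
        + v i * (B.det⁻¹ * Dρ (b *ᵥ Pi.single i 1)) := by
    intro i
    rw [(hρfd.fun_mul (hvfd i)).fderiv]
    simp only [ContinuousLinearMap.add_apply, ContinuousLinearMap.coe_smul',
      ContinuousLinearMap.smul_apply, ContinuousLinearMap.coe_comp', Function.comp_apply,
      ContinuousLinearMap.proj_apply, LinearMap.coe_toContinuousLinearMap',
      Matrix.mulVecLin_apply, Pi.smul_apply, smul_eq_mul, Matrix.mulVec_single, mul_one,
      MulOpposite.op_one, one_smul, Matrix.col_apply,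
      ← hg, ← hv]
  simp only [hspat]
  -- algebraic identities
  have hv' : v = ∑ i : Fin d, v i • (Pi.single i 1 : Fin d → ℝ) := by
    funext j
    simp [Pi.single_apply, Finset.sum_apply]
  have hDsum : Dρ (b *ᵥ v) = ∑ i : Fin d, v i * Dρ (b *ᵥ Pi.single i 1) := by
    conv_lhs => rw [hv']
    simp only [← Matrix.mulVecLin_apply, map_sum, _root_.map_smul, smul_eq_mul]
  have hwv : w = -(b *ᵥ v) := by
    rw [hw]
    conv_rhs => rw [hv]
    rw [Matrix.mulVec_add, Matrix.mulVec_mulVec, Matrix.neg_mulVec, ← Matrix.mulVec_mulVec,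
      ← hg]
    abel
  have htr : trace (M * b) = trace (b * M) := Matrix.trace_mul_comm M b
  have hdiag : ∑ i : Fin d, (M * b) i i = trace (b * M) := by
    rw [← htr]; rfl
  rw [Finset.sum_add_distrib, ← Finset.mul_sum, hdiag]
  have hterm : ∑ i : Fin d, v i * (B.det⁻¹ * Dρ (b *ᵥ Pi.single i 1))
      = B.det⁻¹ * Dρ (b *ᵥ v) := by
    rw [hDsum, Finset.mul_sum]
    exact Finset.sum_congr rfl fun i _ => by ring
  rw [hterm, hwv, map_neg, hC]
  have hBd : B.det ≠ 0 := hdet.ne'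
  field_simp
  ring
end

section
/- Fix d, J ∈ ℕ. Let ρ_ref : ℝ^d → ℝ be continuously differentiable and strictly positive, let a_j ∈ ℝ^d, let A_j be symmetric positive definite d×d real matrices and let w_j ≥ 0 be weights with Σ_{j=1}^J w_j = 1. For t ∈ [0,1] define A_{j,t} := t A_j + (1−t) Id_d, ρ_{j,t}(x) := |det A_{j,t}|⁻¹ ρ_ref(A_{j,t}⁻¹(x − t a_j)), v_{j,t}(x) := a_j + (A_j − Id_d) A_{j,t}⁻¹(x − t a_j), ρ_t := Σ_{j=1}^J w_j ρ_{j,t} and v_t := ρ_t⁻¹ Σ_{j=1}^J w_j ρ_{j,t} v_{j,t}. Then ρ_t is strictly positive, and the family (ρ_t) solves the continuity equation with velocity field v_t: for every t ∈ [0,1] and x ∈ ℝ^d, (∂/∂t) ρ_t(x) + div_x(ρ_t v_t)(x) = 0, where div_x F(x) := Σ_{i=1}^d ∂F_i/∂x_i (x) and ρ_0 = ρ_ref, ρ_1 equals the target mixture density. -/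
open MeasureTheory Matrix Polynomial

attribute [local instance] Matrix.linftyOpNormedAddCommGroup Matrix.linftyOpNormedSpace
  Matrix.linftyOpNormedRing Matrix.linftyOpNormedAlgebra

variable {d : ℕ}

noncomputable def mvCLM (M : Matrix (Fin d) (Fin d) ℝ) : (Fin d → ℝ) →L[ℝ] (Fin d → ℝ) :=
  LinearMap.toContinuousLinearMap M.mulVecLin

@[simp] lemma mvCLM_apply (M : Matrix (Fin d) (Fin d) ℝ) (v : Fin d → ℝ) :
    mvCLM M v = M.mulVec v := rfl

noncomputable def mvCLM2 : Matrix (Fin d) (Fin d) ℝ →L[ℝ] ((Fin d → ℝ) →L[ℝ] (Fin d → ℝ)) :=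
  LinearMap.toContinuousLinearMap
    { toFun := fun M => mvCLM M
      map_add' := fun M N => by ext v i; simp [Matrix.add_mulVec]
      map_smul' := fun c M => by ext v i; simp [Matrix.smul_mulVec] }

@[simp] lemma mvCLM2_apply (M : Matrix (Fin d) (Fin d) ℝ) :
    (mvCLM2 (d := d)) M = mvCLM M := rfl

lemma det_affine_hasDerivAt (C M : Matrix (Fin d) (Fin d) ℝ) (hU : IsUnit C.det) :
    HasDerivAt (fun s : ℝ => det (C + s • M)) (det C * trace (C⁻¹ * M)) 0 := by
  set K := C⁻¹ * M with hK
  set q : Polynomial ℝ := (det (1 + (X : ℝ[X]) • K.map Polynomial.C)).divX.divX with hq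
  have key : ∀ s : ℝ, det (C + s • M) = det C * (1 + trace K * s + q.eval s * s ^ 2) := by
    intro s
    have hCM : C + s • M = C * (1 + s • K) := by
      rw [mul_add, mul_one, Matrix.mul_smul, hK, ← Matrix.mul_assoc,
        Matrix.mul_nonsing_inv _ hU, Matrix.one_mul]
    rw [hCM, det_mul, Matrix.det_one_add_smul]
  have h1 : HasDerivAt (fun s : ℝ => q.eval s * s ^ 2)
      ((derivative q).eval 0 * (0:ℝ) ^ 2 + q.eval 0 * ((2:ℕ) * (0:ℝ) ^ (2-1))) 0 :=
    (q.hasDerivAt 0).mul (hasDerivAt_pow 2 0)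
  have h2 : HasDerivAt (fun s : ℝ => 1 + trace K * s) (trace K) 0 := by
    simpa using ((hasDerivAt_id (0:ℝ)).const_mul (trace K)).const_add 1
  have h3 := (h2.add h1).const_mul (det C)
  simp only [funext key]
  convert h3 using 1
  · rfl
  · rfl
  · funext s; simp
  · simp

lemma det_interp_hasDerivAt (A : Matrix (Fin d) (Fin d) ℝ) (t : ℝ)
    (hU : IsUnit (t • A + (1 - t) • (1 : Matrix (Fin d) (Fin d) ℝ)).det) :
    HasDerivAt (fun s : ℝ => (s • A + (1 - s) • (1 : Matrix (Fin d) (Fin d) ℝ)).det)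
      ((t • A + (1 - t) • (1 : Matrix (Fin d) (Fin d) ℝ)).det *
        trace ((t • A + (1 - t) • (1 : Matrix (Fin d) (Fin d) ℝ))⁻¹ * (A - 1))) t := by
  set C := t • A + (1 - t) • (1 : Matrix (Fin d) (Fin d) ℝ) with hC
  have h0 := det_affine_hasDerivAt C (A - 1) hU
  have h1 : HasDerivAt (fun s : ℝ => s - t) 1 t := (hasDerivAt_id t).sub_const t
  have h2 := HasDerivAt.comp_of_eq t h0 h1 (by simp)
  have key : ∀ s : ℝ, C + (s - t) • (A - 1) = s • A + (1 - s) • 1 := by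
    intro s; rw [hC]; module
  have h3 : ((fun s : ℝ => det (C + s • (A - 1))) ∘ (fun s : ℝ => s - t)) =
      fun s : ℝ => (s • A + (1 - s) • (1 : Matrix (Fin d) (Fin d) ℝ)).det := by
    funext s; simp only [Function.comp_apply, key s]
  rw [h3] at h2
  simpa using h2

lemma inv_interp_hasDerivAt (B : ℝ → Matrix (Fin d) (Fin d) ℝ) (B' : Matrix (Fin d) (Fin d) ℝ)
    (t : ℝ) (hB : HasDerivAt B B' t) (hU : IsUnit (B t)) :
    HasDerivAt (fun s => (B s)⁻¹) (-((B t)⁻¹ * B' * (B t)⁻¹)) t := by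
  have hc : CompleteSpace (Matrix (Fin d) (Fin d) ℝ) := FiniteDimensional.complete ℝ _
  have h := hasFDerivAt_ringInverse (𝕜 := ℝ) hU.unit
  rw [hU.unit_spec] at h
  have h2 := h.comp_hasDerivAt t hB
  have heq : (fun s => Ring.inverse (B s)) = fun s => (B s)⁻¹ := by
    funext s; rw [Matrix.nonsing_inv_eq_ringInverse]
  simp only [Matrix.coe_units_inv, hU.unit_spec, Function.comp_def, heq] at h2
  convert h2 using 1
  · rfl
  · rfl
  · rfl
  · simp

lemma key_j (f : (Fin d → ℝ) → ℝ) (hf : ContDiff ℝ 1 f) (a : Fin d → ℝ)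
    (A : Matrix (Fin d) (Fin d) ℝ) (t : ℝ)
    (hDpos : 0 < (t • A + (1 - t) • (1 : Matrix (Fin d) (Fin d) ℝ)).det)
    (x : Fin d → ℝ) :
    ∃ (Ct : ℝ) (L : Fin d → ((Fin d → ℝ) →L[ℝ] ℝ)),
      HasDerivAt (fun s : ℝ =>
          |(s • A + (1 - s) • (1 : Matrix (Fin d) (Fin d) ℝ)).det|⁻¹ *
            f ((s • A + (1 - s) • (1 : Matrix (Fin d) (Fin d) ℝ))⁻¹.mulVec (x - s • a))) Ct t
      ∧ (∀ i, HasFDerivAt (fun z : Fin d → ℝ =>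
          |(t • A + (1 - t) • (1 : Matrix (Fin d) (Fin d) ℝ)).det|⁻¹ *
            f ((t • A + (1 - t) • (1 : Matrix (Fin d) (Fin d) ℝ))⁻¹.mulVec (z - t • a)) *
          (a + (A - 1).mulVec
            ((t • A + (1 - t) • (1 : Matrix (Fin d) (Fin d) ℝ))⁻¹.mulVec (z - t • a))) i)
          (L i) x)
      ∧ Ct + ∑ i, L i (Pi.single i 1) = 0 := by
  classical
  set B : ℝ → Matrix (Fin d) (Fin d) ℝ := fun s => s • A + (1 - s) • 1 with hBdef
  have hU : IsUnit (B t).det := isUnit_iff_ne_zero.2 hDpos.ne'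
  have hUB : IsUnit (B t) := (Matrix.isUnit_iff_isUnit_det _).2 hU
  set N := (B t)⁻¹ with hN
  set D := (B t).det with hD
  set y : Fin d → ℝ := N.mulVec (x - t • a) with hy
  set g : (Fin d → ℝ) →L[ℝ] ℝ := fderiv ℝ f y with hg
  set v : Fin d → ℝ := a + (A - 1).mulVec y with hv
  set τ : ℝ := trace (N * (A - 1)) with hτ
  -- derivative of B
  have hBd : HasDerivAt B (A - 1) t := by
    have h1 : HasDerivAt (fun s : ℝ => s • A) ((1:ℝ) • A) t := (hasDerivAt_id t).smul_const A
    have h2 : HasDerivAt (fun s : ℝ => (1 - s) • (1 : Matrix (Fin d) (Fin d) ℝ))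
        ((-1:ℝ) • (1 : Matrix (Fin d) (Fin d) ℝ)) t := by
      have := ((hasDerivAt_id t).const_sub 1).smul_const (1 : Matrix (Fin d) (Fin d) ℝ)
      exact this.congr_deriv (by simp)
    exact (h1.add h2).congr_deriv (by simp [sub_eq_add_neg])
  have hNd : HasDerivAt (fun s => (B s)⁻¹) (-(N * (A - 1) * N)) t :=
    inv_interp_hasDerivAt B (A - 1) t hBd hUB
  have hdet : HasDerivAt (fun s => (B s).det) (D * τ) t := by
    have := det_interp_hasDerivAt A t hU
    simpa [hτ, hD, hN] using this
  -- derivative of s ↦ (B s)⁻¹ *ᵥ (x - s • a)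
  set y' : Fin d → ℝ := (-(N * (A - 1) * N)).mulVec (x - t • a) + N.mulVec (-a) with hy'
  have hyd : HasDerivAt (fun s => (B s)⁻¹.mulVec (x - s • a)) y' t := by
    have hc : HasDerivAt (fun s => mvCLM2 ((B s)⁻¹)) (mvCLM2 (-(N * (A - 1) * N))) t := by
      have := (mvCLM2 (d := d)).hasFDerivAt.comp_hasDerivAt t hNd
      simp [Function.comp_def] at this ⊢; exact this
    have hu : HasDerivAt (fun s : ℝ => x - s • a) (-a) t := by
      simpa using ((hasDerivAt_id t).smul_const a).const_sub x
    have := hc.clm_apply hu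
    simpa using this
  have hfd : HasDerivAt (fun s => f ((B s)⁻¹.mulVec (x - s • a))) (g y') t := by
    have hdf : HasFDerivAt f g y := (hf.differentiable one_ne_zero y).hasFDerivAt
    have := hdf.comp_hasDerivAt t hyd
    simpa [Function.comp_def] using this
  have hr : HasDerivAt (fun s => ((B s).det)⁻¹) (-(D * τ) / D ^ 2) t := hdet.inv hDpos.ne'
  have hρ : HasDerivAt (fun s => ((B s).det)⁻¹ * f ((B s)⁻¹.mulVec (x - s • a)))
      (-(D * τ) / D ^ 2 * f y + D⁻¹ * g y') t := hr.mul hfd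
  have hev : (fun s => |(B s).det|⁻¹ * f ((B s)⁻¹.mulVec (x - s • a)))
      =ᶠ[nhds t] (fun s => ((B s).det)⁻¹ * f ((B s)⁻¹.mulVec (x - s • a))) := by
    have hcont : Filter.Tendsto (fun s => (B s).det) (nhds t) (nhds D) := hdet.continuousAt
    filter_upwards [hcont.eventually (eventually_gt_nhds hDpos)] with s hs
    rw [abs_of_pos hs]
  set Ct : ℝ := -(D * τ) / D ^ 2 * f y + D⁻¹ * g y' with hCt
  have hCtd : HasDerivAt (fun s : ℝ =>
      |(s • A + (1 - s) • (1 : Matrix (Fin d) (Fin d) ℝ)).det|⁻¹ *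
        f ((s • A + (1 - s) • (1 : Matrix (Fin d) (Fin d) ℝ))⁻¹.mulVec (x - s • a))) Ct t :=
    hρ.congr_of_eventuallyEq hev
  -- spatial derivatives
  set W : Matrix (Fin d) (Fin d) ℝ := (A - 1) * N with hW
  set P : Fin d → ((Fin d → ℝ) →L[ℝ] ℝ) := fun i =>
    LinearMap.toContinuousLinearMap ((LinearMap.proj i).comp W.mulVecLin) with hP
  set L : Fin d → ((Fin d → ℝ) →L[ℝ] ℝ) := fun i =>
    (D⁻¹ * f y) • P i + ((a + (A - 1).mulVec y) i) • (D⁻¹ • (g.comp (mvCLM N))) with hL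
  have hyx : HasFDerivAt (fun z : Fin d → ℝ => N.mulVec (z - t • a)) (mvCLM N) x := by
    have h1 : HasFDerivAt (fun z : Fin d → ℝ => N.mulVec z) (mvCLM N) x := (mvCLM N).hasFDerivAt
    have h2 := h1.sub_const (N.mulVec (t • a))
    have heq : (fun z : Fin d → ℝ => N.mulVec (z - t • a))
        = fun z => N.mulVec z - N.mulVec (t • a) := funext fun z => Matrix.mulVec_sub _ _ _
    rw [heq]; exact h2
  have hfxz : HasFDerivAt (fun z : Fin d → ℝ => f (N.mulVec (z - t • a))) (g.comp (mvCLM N)) x := by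
    have hdf : HasFDerivAt f g y := (hf.differentiable one_ne_zero y).hasFDerivAt
    have := hdf.comp x hyx
    simpa [Function.comp_def] using this
  have hc1 : HasFDerivAt (fun z : Fin d → ℝ => D⁻¹ * f (N.mulVec (z - t • a)))
      (D⁻¹ • (g.comp (mvCLM N))) x := hfxz.const_mul D⁻¹
  have hvx : ∀ i, HasFDerivAt
      (fun z : Fin d → ℝ => (a + (A - 1).mulVec (N.mulVec (z - t • a))) i) (P i) x := by
    intro i
    have h1 : HasFDerivAt (fun z : Fin d → ℝ => (W.mulVec z) i) (P i) x := (P i).hasFDerivAt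
    have h2 := (h1.sub_const ((W.mulVec (t • a)) i)).const_add (a i)
    have heq : (fun z : Fin d → ℝ => (a + (A - 1).mulVec (N.mulVec (z - t • a))) i)
        = fun z => a i + ((W.mulVec z) i - (W.mulVec (t • a)) i) := by
      funext z
      simp only [Matrix.mulVec_mulVec, ← hW, Matrix.mulVec_sub, Pi.add_apply, Pi.sub_apply]
    rw [heq]; exact h2
  have hLd : ∀ i, HasFDerivAt (fun z : Fin d → ℝ =>
      |(t • A + (1 - t) • (1 : Matrix (Fin d) (Fin d) ℝ)).det|⁻¹ *
        f ((t • A + (1 - t) • (1 : Matrix (Fin d) (Fin d) ℝ))⁻¹.mulVec (z - t • a)) *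
      (a + (A - 1).mulVec
        ((t • A + (1 - t) • (1 : Matrix (Fin d) (Fin d) ℝ))⁻¹.mulVec (z - t • a))) i)
      (L i) x := by
    intro i
    have habs : |(t • A + (1 - t) • (1 : Matrix (Fin d) (Fin d) ℝ)).det|⁻¹ = D⁻¹ := by
      rw [hD, hBdef]; rw [abs_of_pos hDpos]
    simp only [habs]
    exact hc1.mul (hvx i)
  refine ⟨Ct, L, hCtd, hLd, ?_⟩
  -- the cancellation
  have hsum1 : ∑ i, (P i) (Pi.single i 1) = τ := by
    rw [hτ, Matrix.trace_mul_comm, ← hW]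
    simp only [hP, LinearMap.coe_toContinuousLinearMap', LinearMap.comp_apply,
      Matrix.mulVecLin_apply, LinearMap.proj_apply, Matrix.mulVec_single]
    simp [Matrix.trace, Matrix.diag]
  have hsum2 : ∑ i, v i * g (N.mulVec (Pi.single i 1)) = g (N.mulVec v) := by
    have hsingle : ∑ i, v i • (Pi.single i (1:ℝ) : Fin d → ℝ) = v := by
      simp only [← Pi.single_smul, smul_eq_mul, mul_one, Finset.univ_sum_single]
    have hv' : N.mulVec v = ∑ i, v i • N.mulVec (Pi.single i 1) := by
      calc N.mulVec v = N.mulVecLin (∑ i, v i • (Pi.single i (1:ℝ) : Fin d → ℝ)) := by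
            rw [hsingle]; rfl
      _ = ∑ i, v i • N.mulVecLin (Pi.single i (1:ℝ)) := by
            rw [map_sum]; exact Finset.sum_congr rfl fun i _ => by rw [_root_.map_smul]
      _ = ∑ i, v i • N.mulVec (Pi.single i 1) := rfl
    rw [hv', map_sum]
    exact Finset.sum_congr rfl fun i _ => by rw [_root_.map_smul, smul_eq_mul]
  have hyv : y' + N.mulVec v = 0 := by
    rw [hy', hv]
    rw [Matrix.neg_mulVec, ← Matrix.mulVec_mulVec, ← Matrix.mulVec_mulVec,
      Matrix.mulVec_add, Matrix.mulVec_neg, ← hy]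
    abel
  have hgv : g (N.mulVec v) = -(g y') := by
    have h0 : g y' + g (N.mulVec v) = 0 := by rw [← map_add, hyv, map_zero]
    linarith
  have happ : ∀ i, L i (Pi.single i 1)
      = (D⁻¹ * f y) * (P i) (Pi.single i 1) + v i * (D⁻¹ * g (N.mulVec (Pi.single i 1))) := by
    intro i
    rfl
  rw [Finset.sum_congr rfl fun i _ => happ i, Finset.sum_add_distrib, ← Finset.mul_sum, hsum1]
  have h2 : ∑ i, v i * (D⁻¹ * g (N.mulVec (Pi.single i 1)))
      = D⁻¹ * g (N.mulVec v) := by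
    rw [← hsum2, Finset.mul_sum]
    exact Finset.sum_congr rfl fun i _ => by ring
  rw [h2, hgv, hCt]
  field_simp
  ring

lemma posdef_interp {d : ℕ} (A : Matrix (Fin d) (Fin d) ℝ) (hA : A.PosDef) {t : ℝ}
    (h0 : 0 ≤ t) (h1 : t ≤ 1) :
    (t • A + (1 - t) • (1 : Matrix (Fin d) (Fin d) ℝ)).PosDef := by
  rw [Matrix.posDef_iff_dotProduct_mulVec] at hA ⊢
  refine ⟨?_, fun x hx => ?_⟩
  · have hA1 := hA.1
    simp only [Matrix.IsHermitian, Matrix.conjTranspose_add, Matrix.conjTranspose_smul,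
      star_trivial] at hA1 ⊢
    rw [hA1, Matrix.conjTranspose_one]
  · have p1 := hA.2 hx
    have p2 := (Matrix.posDef_iff_dotProduct_mulVec.mp (Matrix.PosDef.one (n := Fin d) (R := ℝ))).2 hx
    simp only [Matrix.one_mulVec] at p2
    simp only [Matrix.add_mulVec, Matrix.smul_mulVec, dotProduct_add,
      dotProduct_smul, smul_eq_mul, Matrix.one_mulVec]
    rcases h0.eq_or_lt with h | h
    · rw [← h]; simpa using p2
    · nlinarith [mul_pos h p1, mul_nonneg (sub_nonneg.2 h1) p2.le]

/-- Main continuity-equation statement for the mixture transport: with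
`A_{j,t} = t A_j + (1-t) Id`, `ρ_{j,t}(x) = |det A_{j,t}|⁻¹ ρ_ref (A_{j,t}⁻¹(x - t a_j))`,
`v_{j,t}(x) = a_j + (A_j - Id) A_{j,t}⁻¹ (x - t a_j)`, `ρ_t = ∑ j, w_j ρ_{j,t}` and
`v_t = ρ_t⁻¹ ∑ j, w_j ρ_{j,t} v_{j,t}`, the densities `ρ_t` are strictly positive, solve
`∂ₜ ρ_t + div_x (ρ_t v_t) = 0` on `[0,1] × ℝ^d`, and interpolate between `ρ_ref` and the
target mixture density. -/
theorem mixture_continuity_equation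
    (d J : ℕ) (ρref : (Fin d → ℝ) → ℝ)
    (hsm : ContDiff ℝ 1 ρref) (hpos : ∀ x, 0 < ρref x) (hint : ∫ x, ρref x = 1)
    (a : Fin J → Fin d → ℝ) (A : Fin J → Matrix (Fin d) (Fin d) ℝ)
    (hA : ∀ j, (A j).PosDef)
    (w : Fin J → ℝ) (hw : ∀ j, 0 ≤ w j) (hw1 : ∑ j : Fin J, w j = 1) :
    let Ajt : Fin J → ℝ → Matrix (Fin d) (Fin d) ℝ :=
      fun j t => t • A j + (1 - t) • (1 : Matrix (Fin d) (Fin d) ℝ)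
    let ρjt : Fin J → ℝ → (Fin d → ℝ) → ℝ :=
      fun j t x => |(Ajt j t).det|⁻¹ * ρref ((Ajt j t)⁻¹.mulVec (x - t • a j))
    let vjt : Fin J → ℝ → (Fin d → ℝ) → (Fin d → ℝ) :=
      fun j t x => a j + (A j - 1).mulVec ((Ajt j t)⁻¹.mulVec (x - t • a j))
    let ρ : ℝ → (Fin d → ℝ) → ℝ := fun t x => ∑ j : Fin J, w j * ρjt j t x
    let v : ℝ → (Fin d → ℝ) → (Fin d → ℝ) :=
      fun t x => (ρ t x)⁻¹ • ∑ j : Fin J, (w j * ρjt j t x) • vjt j t x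
    (∀ t ∈ Set.Icc (0 : ℝ) 1, ∀ x : Fin d → ℝ, 0 < ρ t x)
    ∧ (∀ t ∈ Set.Icc (0 : ℝ) 1, ∀ x : Fin d → ℝ,
        deriv (fun s : ℝ => ρ s x) t
          + ∑ i : Fin d, fderiv ℝ (fun y : Fin d → ℝ => ρ t y * v t y i) x (Pi.single i 1)
          = 0)
    ∧ (∀ x : Fin d → ℝ, ρ 0 x = ρref x)
    ∧ (∀ x : Fin d → ℝ,
        ρ 1 x = ∑ j : Fin J, w j * (|(A j).det|⁻¹ * ρref ((A j)⁻¹.mulVec (x - a j)))) := by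
  intro Ajt ρjt vjt ρ v
  have hDpos : ∀ j : Fin J, ∀ t ∈ Set.Icc (0:ℝ) 1, 0 < (Ajt j t).det := fun j t ht =>
    (posdef_interp (A j) (hA j) ht.1 ht.2).det_pos
  have hρjtpos : ∀ j : Fin J, ∀ t ∈ Set.Icc (0:ℝ) 1, ∀ x, 0 < ρjt j t x := by
    intro j t ht x
    exact mul_pos (inv_pos.2 (abs_pos.2 (hDpos j t ht).ne')) (hpos _)
  have part1 : ∀ t ∈ Set.Icc (0:ℝ) 1, ∀ x : Fin d → ℝ, 0 < ρ t x := by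
    intro t ht x
    have hex : ∃ j ∈ Finset.univ, 0 < w j * ρjt j t x := by
      by_contra hcon
      push_neg at hcon
      have hz : ∀ j : Fin J, w j = 0 := by
        intro j
        by_contra hj
        exact absurd (mul_pos ((hw j).lt_of_ne (Ne.symm hj)) (hρjtpos j t ht x))
          (not_lt.2 (hcon j (Finset.mem_univ j)))
      rw [Finset.sum_congr rfl fun j _ => hz j, Finset.sum_const_zero] at hw1
      exact one_ne_zero hw1.symm
    exact Finset.sum_pos' (fun j _ => mul_nonneg (hw j) (hρjtpos j t ht x).le) hex
  refine ⟨part1, ?_, ?_, ?_⟩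
  · -- continuity equation
    intro t ht x
    have hkey := fun j : Fin J => key_j ρref hsm (a j) (A j) t (hDpos j t ht) x
    choose Ct L hCt hL hcancel using hkey
    have hder : HasDerivAt (fun s : ℝ => ρ s x) (∑ j, w j * Ct j) t := by
      exact HasDerivAt.fun_sum fun j _ => (hCt j).const_mul (w j)
    have hfun : ∀ i : Fin d, (fun y : Fin d → ℝ => ρ t y * v t y i)
        = fun y => ∑ j, w j * (ρjt j t y * vjt j t y i) := by
      intro i
      funext y
      have hρy : ρ t y ≠ 0 := (part1 t ht y).ne'
      show ρ t y * ((ρ t y)⁻¹ • ∑ j, (w j * ρjt j t y) • vjt j t y) i = _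
      rw [Pi.smul_apply, Finset.sum_apply, smul_eq_mul, ← mul_assoc,
        mul_inv_cancel₀ hρy, one_mul]
      exact Finset.sum_congr rfl fun j _ => by rw [Pi.smul_apply, smul_eq_mul, mul_assoc]
    have hFD : ∀ i : Fin d, HasFDerivAt (fun y => ∑ j, w j * (ρjt j t y * vjt j t y i))
        (∑ j, w j • L j i) x := by
      intro i
      exact HasFDerivAt.fun_sum fun j _ => (hL j i).const_mul (w j)
    rw [hder.deriv]
    have hfd2 : ∀ i : Fin d,
        fderiv ℝ (fun y : Fin d → ℝ => ρ t y * v t y i) x (Pi.single i 1)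
          = ∑ j, w j * (L j i (Pi.single i 1)) := by
      intro i
      rw [hfun i, (hFD i).fderiv]
      rw [ContinuousLinearMap.sum_apply]
      exact Finset.sum_congr rfl fun j _ => by
        rw [ContinuousLinearMap.smul_apply, smul_eq_mul]
    rw [Finset.sum_congr rfl fun i _ => hfd2 i, Finset.sum_comm, ← Finset.sum_add_distrib]
    rw [show (0:ℝ) = ∑ j : Fin J, w j * 0 from by simp]
    refine Finset.sum_congr rfl fun j _ => ?_
    rw [← Finset.mul_sum, ← mul_add, hcancel j, mul_zero]
  · -- t = 0
    intro x
    show ∑ j : Fin J, w j *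
        (|((0:ℝ) • A j + (1 - (0:ℝ)) • (1 : Matrix (Fin d) (Fin d) ℝ)).det|⁻¹ *
          ρref (((0:ℝ) • A j + (1 - (0:ℝ)) • (1 : Matrix (Fin d) (Fin d) ℝ))⁻¹.mulVec
            (x - (0:ℝ) • a j))) = ρref x
    simp only [zero_smul, sub_zero, one_smul, zero_add, Matrix.det_one, abs_one, inv_one,
      Matrix.one_mulVec, one_mul]
    rw [← Finset.sum_mul, hw1, one_mul]
  · -- t = 1
    intro x
    show ∑ j : Fin J, w j *
        (|((1:ℝ) • A j + (1 - (1:ℝ)) • (1 : Matrix (Fin d) (Fin d) ℝ)).det|⁻¹ *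
          ρref (((1:ℝ) • A j + (1 - (1:ℝ)) • (1 : Matrix (Fin d) (Fin d) ℝ))⁻¹.mulVec
            (x - (1:ℝ) • a j))) = _
    simp only [one_smul, sub_self, zero_smul, add_zero]
end

section
/- Fix d, J ∈ ℕ. Let C be a symmetric positive definite d×d real matrix, let a_1,…,a_J ∈ ℝ^d and let w_1,…,w_J ∈ ℝ be real weights (possibly negative) with Σ_{j=1}^J w_j = 1. If the mixture ρ_tar(x) := Σ_{j=1}^J w_j G[a_j, C](x) satisfies ρ_tar(x) > 0 for all x ∈ ℝ^d, then for every t ∈ [0,1] the intermediate density ρ_t(x) := Σ_{j=1}^J w_j G[t a_j, C](x) also satisfies ρ_t(x) > 0 for all x ∈ ℝ^d. -/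
open Matrix Real

/-- The Gaussian density `G[m,C](x) = (2π)^{-d/2} (det C)^{-1/2} exp(-½ (x-m)ᵀ C⁻¹ (x-m))`. -/
noncomputable def gaussianDensity {d : ℕ} (m : Fin d → ℝ) (C : Matrix (Fin d) (Fin d) ℝ)
    (x : Fin d → ℝ) : ℝ :=
  (2 * Real.pi) ^ (-(d : ℝ) / 2) * C.det ^ (-(1 : ℝ) / 2) *
    Real.exp (-(1 / 2) * ((x - m) ⬝ᵥ C⁻¹.mulVec (x - m)))


open MeasureTheory

section Aux

variable {d : ℕ}

/-- symmetry of a quadratic-type dot product for a symmetric matrix -/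
lemma dot_symm {A : Matrix (Fin d) (Fin d) ℝ} (hAt : Aᵀ = A) (v w : Fin d → ℝ) :
    v ⬝ᵥ A *ᵥ w = w ⬝ᵥ A *ᵥ v := by
  rw [dotProduct_mulVec, ← Matrix.mulVec_transpose, hAt, dotProduct_comm]

lemma isHermitian_transpose_eq {A : Matrix (Fin d) (Fin d) ℝ} (hA : A.IsHermitian) : Aᵀ = A := by
  ext i j
  simpa [Matrix.conjTranspose_apply] using congrFun (congrFun hA i) j

lemma posdef_smul {A : Matrix (Fin d) (Fin d) ℝ} (hA : A.PosDef) {c : ℝ} (hc : 0 < c) :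
    (c • A).PosDef := by
  refine ⟨?_, fun x hx => ?_⟩
  · show (c • A)ᴴ = c • A
    rw [conjTranspose_smul, hA.1.eq]
    norm_num
  · exact (hA.smul hc).2 hx

lemma possemidef_det_nonneg {A : Matrix (Fin d) (Fin d) ℝ} (hA : A.PosSemidef) : 0 ≤ A.det := by
  rw [hA.1.det_eq_prod_eigenvalues]
  exact Finset.prod_nonneg fun i _ => hA.eigenvalues_nonneg i

lemma integrable_exp_quad1 (c : ℝ) :
    Integrable (fun u : ℝ => Real.exp (-(1/2) * u^2 + c * u)) := by
  have h : ∀ u : ℝ, -(1/2) * u^2 + c*u = -(1/2) * (u - c)^2 + c^2/2 := by intro u; ring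
  simp_rw [h, Real.exp_add]
  exact ((integrable_exp_neg_mul_sq (by norm_num : (0:ℝ) < 1/2)).comp_sub_right c).mul_const _

lemma integral_exp_quad1 (c : ℝ) :
    ∫ u : ℝ, Real.exp (-(1/2) * u^2 + c * u) = Real.sqrt (2*Real.pi) * Real.exp (c^2/2) := by
  have h : ∀ u : ℝ, -(1/2) * u^2 + c*u = -(1/2) * (u - c)^2 + c^2/2 := by intro u; ring
  simp_rw [h, Real.exp_add]
  rw [integral_mul_const,
    integral_sub_right_eq_self (fun u : ℝ => Real.exp (-(1/2) * u^2)) c,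
    integral_gaussian]
  congr 2
  rw [div_div_eq_mul_div, div_one, mul_comm]

end Aux


section Aux2
variable {d : ℕ}

example (c : Fin d → ℝ) (u : Fin d → ℝ) :
    Real.exp (-(1/2) * (u ⬝ᵥ u) + c ⬝ᵥ u) = ∏ i, Real.exp (-(1/2) * (u i)^2 + c i * u i) := by
  rw [← Real.exp_sum]
  congr 1
  rw [dotProduct, dotProduct, Finset.mul_sum, ← Finset.sum_add_distrib]
  exact Finset.sum_congr rfl fun i _ => by ring

lemma integrable_exp_std (c : Fin d → ℝ) :
    Integrable (fun u : Fin d → ℝ => Real.exp (-(1/2) * (u ⬝ᵥ u) + c ⬝ᵥ u)) := by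
  have h : ∀ u : Fin d → ℝ, Real.exp (-(1/2) * (u ⬝ᵥ u) + c ⬝ᵥ u)
      = ∏ i, Real.exp (-(1/2) * (u i)^2 + c i * u i) := by
    intro u
    rw [← Real.exp_sum]
    congr 1
    rw [dotProduct, dotProduct, Finset.mul_sum, ← Finset.sum_add_distrib]
    exact Finset.sum_congr rfl fun i _ => by ring
  simp_rw [h]
  exact Integrable.fintype_prod (fun i => integrable_exp_quad1 (c i))

lemma integral_exp_std (c : Fin d → ℝ) :
    ∫ u : Fin d → ℝ, Real.exp (-(1/2) * (u ⬝ᵥ u) + c ⬝ᵥ u)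
      = Real.sqrt (2*Real.pi) ^ d * Real.exp ((c ⬝ᵥ c)/2) := by
  have h : ∀ u : Fin d → ℝ, Real.exp (-(1/2) * (u ⬝ᵥ u) + c ⬝ᵥ u)
      = ∏ i, Real.exp (-(1/2) * (u i)^2 + c i * u i) := by
    intro u
    rw [← Real.exp_sum]
    congr 1
    rw [dotProduct, dotProduct, Finset.mul_sum, ← Finset.sum_add_distrib]
    exact Finset.sum_congr rfl fun i _ => by ring
  simp_rw [h]
  rw [MeasureTheory.integral_fintype_prod_volume_eq_prod
    (f := fun i (u : ℝ) => Real.exp (-(1/2) * u^2 + c i * u))]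
  simp_rw [integral_exp_quad1]
  rw [Finset.prod_mul_distrib, Finset.prod_const, ← Real.exp_sum, Finset.card_univ, Fintype.card_fin]
  congr 2
  rw [dotProduct, Finset.sum_div]
  exact Finset.sum_congr rfl fun i _ => by ring

lemma integral_comp_mulVec {M : Matrix (Fin d) (Fin d) ℝ} (hM : M.det ≠ 0)
    (f : (Fin d → ℝ) → ℝ) :
    ∫ z, f z = |M.det| * ∫ u, f (M *ᵥ u) := by
  have hinv : Invertible M := M.invertibleOfIsUnitDet (isUnit_iff_ne_zero.2 hM)
  let ℓ : (Fin d → ℝ) ≃ₗ[ℝ] (Fin d → ℝ) := M.toLinearEquiv' hinv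
  let e : (Fin d → ℝ) ≃ᵐ (Fin d → ℝ) :=
    ℓ.toContinuousLinearEquiv.toHomeomorph.toMeasurableEquiv
  have he : ⇑e = ⇑(Matrix.toLin' M) := by
    funext v
    show ℓ v = Matrix.toLin' M v
    rw [← Matrix.toLinearEquiv'_apply M hinv]
    rfl
  have hmap : Measure.map (⇑e) volume = ENNReal.ofReal (|M.det|⁻¹) • volume := by
    rw [he]
    rw [Real.map_matrix_volume_pi_eq_smul_volume_pi hM, abs_inv]
  have := MeasureTheory.integral_map_equiv (μ := volume) e f
  rw [hmap] at this
  rw [integral_smul_measure] at this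
  have he2 : ∀ u, e u = M *ᵥ u := by
    intro u; rw [he]; exact Matrix.toLin'_apply M u
  simp_rw [he2] at this
  rw [ENNReal.toReal_ofReal (by positivity)] at this
  rw [← this, smul_eq_mul, ← mul_assoc, mul_inv_cancel₀ (by simpa using hM), one_mul]

lemma integrable_comp_mulVec {M : Matrix (Fin d) (Fin d) ℝ} (hM : M.det ≠ 0)
    {f : (Fin d → ℝ) → ℝ} (hf : Integrable (fun u => f (M *ᵥ u))) : Integrable f := by
  have hinv : Invertible M := M.invertibleOfIsUnitDet (isUnit_iff_ne_zero.2 hM)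
  let ℓ : (Fin d → ℝ) ≃ₗ[ℝ] (Fin d → ℝ) := M.toLinearEquiv' hinv
  let e : (Fin d → ℝ) ≃ᵐ (Fin d → ℝ) :=
    ℓ.toContinuousLinearEquiv.toHomeomorph.toMeasurableEquiv
  have he : ⇑e = ⇑(Matrix.toLin' M) := by
    funext v
    show ℓ v = Matrix.toLin' M v
    rw [← Matrix.toLinearEquiv'_apply M hinv]
    rfl
  have hmap : Measure.map (⇑e) volume = ENNReal.ofReal (|M.det|⁻¹) • volume := by
    rw [he, Real.map_matrix_volume_pi_eq_smul_volume_pi hM, abs_inv]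
  have h1 : Integrable f (Measure.map (⇑e) volume) := by
    rw [MeasureTheory.integrable_map_equiv e f]
    have : (f ∘ ⇑e) = fun u => f (M *ᵥ u) := by
      funext u
      simp only [Function.comp_apply, he, Matrix.toLin'_apply]
    rw [this]; exact hf
  rw [hmap] at h1
  exact (integrable_smul_measure (by simp [hM]) (by simp)).mp h1

end Aux2

section Quad
variable {d : ℕ} {P : Matrix (Fin d) (Fin d) ℝ}

lemma mulVec_dot (A : Matrix (Fin d) (Fin d) ℝ) (u w : Fin d → ℝ) :
    (A *ᵥ u) ⬝ᵥ w = u ⬝ᵥ (Aᵀ *ᵥ w) := by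
  rw [dotProduct_comm, dotProduct_mulVec, ← Matrix.mulVec_transpose, dotProduct_comm]

open scoped MatrixOrder in
lemma quad_facts (hP : P.PosDef) :
    ∃ S : Matrix (Fin d) (Fin d) ℝ, S.det ≠ 0 ∧ |S.det| = Real.sqrt (P.det⁻¹) ∧
      (∀ u : Fin d → ℝ, (S *ᵥ u) ⬝ᵥ P *ᵥ (S *ᵥ u) = u ⬝ᵥ u) ∧
      (∀ b u : Fin d → ℝ, b ⬝ᵥ (S *ᵥ u) = (S *ᵥ b) ⬝ᵥ u) ∧
      (∀ b : Fin d → ℝ, (S *ᵥ b) ⬝ᵥ (S *ᵥ b) = b ⬝ᵥ P⁻¹ *ᵥ b) := by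
  have hdP : (0:ℝ) < P.det := hP.det_pos
  have hdPinv : P⁻¹.det = P.det⁻¹ := by
    rw [Matrix.det_nonsing_inv, Ring.inverse_eq_inv']
  have hSpsd : P⁻¹.PosSemidef := hP.inv.posSemidef
  set S := CFC.sqrt P⁻¹ with hSdef
  have hS : S.PosSemidef := Matrix.nonneg_iff_posSemidef.mp (CFC.sqrt_nonneg _)
  have hSS : S * S = P⁻¹ := CFC.sqrt_mul_sqrt_self P⁻¹ (Matrix.nonneg_iff_posSemidef.mpr hSpsd)
  have hSt : Sᵀ = S := isHermitian_transpose_eq hS.1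
  have h2 : S.det * S.det = P.det⁻¹ := by
    rw [← hdPinv, ← hSS, Matrix.det_mul]
  have hSnn : 0 ≤ S.det := possemidef_det_nonneg hS
  have hdS : S.det = Real.sqrt (P.det⁻¹) := by
    rw [← h2, Real.sqrt_mul_self hSnn]
  have hdSne : S.det ≠ 0 := by
    rw [hdS]
    exact (Real.sqrt_pos.mpr (by positivity)).ne'
  have hUnit : IsUnit S.det := isUnit_iff_ne_zero.2 hdSne
  have hPinv : P = (S * S)⁻¹ := by
    rw [hSS, Matrix.nonsing_inv_nonsing_inv P (isUnit_iff_ne_zero.2 hdP.ne')]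
  have hSPS : S * P * S = 1 := by
    rw [hPinv, Matrix.mul_inv_rev, ← Matrix.mul_assoc S S⁻¹ S⁻¹,
      Matrix.mul_nonsing_inv S hUnit, Matrix.one_mul, Matrix.nonsing_inv_mul S hUnit]
  refine ⟨S, hdSne, by rw [abs_of_nonneg hSnn, hdS], fun u => ?_, fun b u => ?_, fun b => ?_⟩
  · rw [mulVec_dot, hSt, Matrix.mulVec_mulVec, Matrix.mulVec_mulVec, hSPS, Matrix.one_mulVec]
  · rw [mulVec_dot, hSt]
  · rw [mulVec_dot, hSt, Matrix.mulVec_mulVec, hSS]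

lemma integrable_exp_quadForm (hP : P.PosDef) (b : Fin d → ℝ) :
    Integrable (fun z : Fin d → ℝ => Real.exp (-(1/2) * (z ⬝ᵥ P *ᵥ z) + b ⬝ᵥ z)) := by
  obtain ⟨S, hdSne, _, hquad, hlin, _⟩ := quad_facts hP
  refine integrable_comp_mulVec hdSne ?_
  have heq : (fun u : Fin d → ℝ =>
      (fun z => Real.exp (-(1/2) * (z ⬝ᵥ P *ᵥ z) + b ⬝ᵥ z)) (S *ᵥ u))
      = fun u : Fin d → ℝ => Real.exp (-(1/2) * (u ⬝ᵥ u) + (S *ᵥ b) ⬝ᵥ u) := by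
    funext u
    simp only
    rw [hquad u, hlin b u]
  rw [heq]
  exact integrable_exp_std (S *ᵥ b)

lemma integral_exp_quadForm (hP : P.PosDef) (b : Fin d → ℝ) :
    ∫ z, Real.exp (-(1/2) * (z ⬝ᵥ P *ᵥ z) + b ⬝ᵥ z)
      = Real.sqrt (2*Real.pi) ^ d * Real.sqrt (P.det⁻¹) * Real.exp ((b ⬝ᵥ P⁻¹ *ᵥ b)/2) := by
  obtain ⟨S, hdSne, habs, hquad, hlin, hsq⟩ := quad_facts hP
  rw [integral_comp_mulVec hdSne (fun z => Real.exp (-(1/2) * (z ⬝ᵥ P *ᵥ z) + b ⬝ᵥ z))]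
  have : (fun u : Fin d → ℝ => Real.exp (-(1/2) * ((S *ᵥ u) ⬝ᵥ P *ᵥ (S *ᵥ u)) + b ⬝ᵥ (S *ᵥ u)))
      = fun u : Fin d → ℝ => Real.exp (-(1/2) * (u ⬝ᵥ u) + (S *ᵥ b) ⬝ᵥ u) := by
    funext u; rw [hquad u, hlin b u]
  simp_rw [this]
  rw [integral_exp_std (S *ᵥ b), hsq b, habs]
  ring

end Quad



section Conv
variable {d : ℕ}

lemma gaussianDensity_pos {C : Matrix (Fin d) (Fin d) ℝ} (hC : C.PosDef)
    (m x : Fin d → ℝ) : 0 < gaussianDensity m C x := by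
  unfold gaussianDensity
  have h1 : (0:ℝ) < 2 * Real.pi := by positivity
  exact mul_pos (mul_pos (Real.rpow_pos_of_pos h1 _) (Real.rpow_pos_of_pos hC.det_pos _))
    (Real.exp_pos _)

lemma quad_expand {A : Matrix (Fin d) (Fin d) ℝ} (hAt : Aᵀ = A) (v w : Fin d → ℝ) :
    (v - w) ⬝ᵥ A *ᵥ (v - w) = v ⬝ᵥ A *ᵥ v - 2*(w ⬝ᵥ A *ᵥ v) + w ⬝ᵥ A *ᵥ w := by
  rw [Matrix.mulVec_sub, sub_dotProduct, dotProduct_sub, dotProduct_sub, dot_symm hAt v w]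
  ring

lemma exp_combine (z1 z2 k e1 e2 e3 : ℝ) (h : e1 + e2 = k + e3) :
    z1 * Real.exp e1 * (z2 * Real.exp e2) = z1 * z2 * Real.exp k * Real.exp e3 := by
  calc z1 * Real.exp e1 * (z2 * Real.exp e2) = (z1*z2) * (Real.exp e1 * Real.exp e2) := by ring
    _ = (z1*z2) * Real.exp (e1+e2) := by rw [Real.exp_add]
    _ = (z1*z2) * (Real.exp k * Real.exp e3) := by rw [h, Real.exp_add]
    _ = z1 * z2 * Real.exp k * Real.exp e3 := by ring

lemma gaussian_conv {C : Matrix (Fin d) (Fin d) ℝ} (hC : C.PosDef) (aj x : Fin d → ℝ)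
    {t : ℝ} (ht1 : t^2 < 1) :
    Integrable (fun u : Fin d → ℝ =>
        gaussianDensity aj C u * gaussianDensity (t • u) ((1 - t^2) • C) x) ∧
    ∫ u : Fin d → ℝ, gaussianDensity aj C u * gaussianDensity (t • u) ((1 - t^2) • C) x
      = gaussianDensity (t • aj) C x := by
  have hs : (0:ℝ) < 1 - t^2 := by linarith
  have hsne : (1 - t^2) ≠ 0 := hs.ne'
  have hdC : (0:ℝ) < C.det := hC.det_pos
  have hCdet : IsUnit C.det := isUnit_iff_ne_zero.2 hdC.ne'
  have hA : C⁻¹.PosDef := hC.inv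
  have hAt : C⁻¹ᵀ = C⁻¹ := isHermitian_transpose_eq hA.1
  have hCA : C * C⁻¹ = 1 := Matrix.mul_nonsing_inv _ hCdet
  have hAC : C⁻¹ * C = 1 := Matrix.nonsing_inv_mul _ hCdet
  have hBinv : ((1-t^2) • C)⁻¹ = (1-t^2)⁻¹ • C⁻¹ := by
    apply Matrix.inv_eq_right_inv
    rw [Matrix.smul_mul, Matrix.mul_smul, smul_smul, mul_inv_cancel₀ hsne, hCA, one_smul]
  have hP : ((1-t^2)⁻¹ • C⁻¹).PosDef := posdef_smul hA (by positivity)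
  have hPinv : ((1-t^2)⁻¹ • C⁻¹)⁻¹ = (1-t^2) • C := by
    apply Matrix.inv_eq_right_inv
    rw [Matrix.smul_mul, Matrix.mul_smul, smul_smul, inv_mul_cancel₀ hsne, hAC, one_smul]
  set b : Fin d → ℝ := C⁻¹ *ᵥ aj + (t * (1-t^2)⁻¹) • (C⁻¹ *ᵥ x) with hbdef
  set k : ℝ := -(1/2) * (aj ⬝ᵥ C⁻¹ *ᵥ aj) - (1-t^2)⁻¹/2 * (x ⬝ᵥ C⁻¹ *ᵥ x) with hkdef
  have hpoint : ∀ u : Fin d → ℝ,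
      gaussianDensity aj C u * gaussianDensity (t • u) ((1 - t^2) • C) x
      = ((2 * Real.pi) ^ (-(d : ℝ) / 2) * C.det ^ (-(1 : ℝ) / 2))
        * ((2 * Real.pi) ^ (-(d : ℝ) / 2) * ((1-t^2) • C).det ^ (-(1 : ℝ) / 2))
        * Real.exp k
        * Real.exp (-(1/2) * (u ⬝ᵥ ((1-t^2)⁻¹ • C⁻¹) *ᵥ u) + b ⬝ᵥ u) := by
    intro u
    unfold gaussianDensity
    rw [hBinv]
    apply exp_combine
    simp only [Matrix.smul_mulVec, dotProduct_smul, smul_eq_mul]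
    rw [quad_expand hAt u aj, quad_expand hAt x (t • u)]
    simp only [smul_dotProduct, Matrix.mulVec_smul, dotProduct_smul, hbdef, add_dotProduct,
      mulVec_dot, hAt, smul_eq_mul, hkdef]
    rw [dot_symm hAt x u]
    field_simp
    ring
  constructor
  · simp_rw [hpoint]
    exact (integrable_exp_quadForm hP b).const_mul _
  · simp_rw [hpoint]
    rw [MeasureTheory.integral_const_mul, integral_exp_quadForm hP b, hPinv]
    have hdet1 : ((1-t^2)⁻¹ • C⁻¹).det⁻¹ = (1-t^2)^d * C.det := by
      rw [Matrix.det_smul, Matrix.det_nonsing_inv, Ring.inverse_eq_inv', Fintype.card_fin,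
        mul_inv, inv_inv, inv_pow, inv_inv]
    have hdet2 : ((1-t^2) • C).det = (1-t^2)^d * C.det := by
      rw [Matrix.det_smul, Fintype.card_fin]
    have hc : (0:ℝ) < (1-t^2)^d * C.det := by positivity
    have h2π : (0:ℝ) < 2*Real.pi := by positivity
    have f1 : (2*Real.pi) ^ (-(d:ℝ)/2) * Real.sqrt (2*Real.pi) ^ d = 1 := by
      rw [Real.sqrt_eq_rpow, ← Real.rpow_natCast ((2*Real.pi) ^ ((1:ℝ)/2)) d,
        ← Real.rpow_mul h2π.le, ← Real.rpow_add h2π]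
      rw [show -(d:ℝ)/2 + 1/2 * (d:ℝ) = 0 by ring, Real.rpow_zero]
    have f2 : ((1-t^2)^d * C.det) ^ (-(1:ℝ)/2) * Real.sqrt ((1-t^2)^d * C.det) = 1 := by
      rw [Real.sqrt_eq_rpow, ← Real.rpow_add hc]
      rw [show -(1:ℝ)/2 + 1/2 = 0 by ring, Real.rpow_zero]
    have hCb : C *ᵥ b = aj + (t * (1-t^2)⁻¹) • x := by
      rw [hbdef, Matrix.mulVec_add, Matrix.mulVec_smul, Matrix.mulVec_mulVec,
        Matrix.mulVec_mulVec, hCA, Matrix.one_mulVec, Matrix.one_mulVec]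
    have hq : b ⬝ᵥ ((1-t^2) • C) *ᵥ b
        = (1-t^2) * ((aj ⬝ᵥ C⁻¹ *ᵥ aj) + 2*(t*(1-t^2)⁻¹)*(aj ⬝ᵥ C⁻¹ *ᵥ x)
            + (t*(1-t^2)⁻¹)^2*(x ⬝ᵥ C⁻¹ *ᵥ x)) := by
      rw [Matrix.smul_mulVec, dotProduct_smul, hCb]
      simp only [hbdef, dotProduct_add, dotProduct_smul, add_dotProduct, smul_dotProduct,
        mulVec_dot, hAt, smul_eq_mul]
      rw [dot_symm hAt x aj]
      ring
    rw [hdet1, hdet2, hq]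
    unfold gaussianDensity
    rw [quad_expand hAt x (t • aj)]
    simp only [smul_dotProduct, Matrix.mulVec_smul, dotProduct_smul, smul_eq_mul]
    rw [show ∀ e3 : ℝ,
      (2 * Real.pi) ^ (-(d : ℝ) / 2) * C.det ^ (-(1 : ℝ) / 2)
        * ((2 * Real.pi) ^ (-(d : ℝ) / 2) * ((1-t^2)^d * C.det) ^ (-(1 : ℝ) / 2))
        * Real.exp k
        * (Real.sqrt (2*Real.pi) ^ d * Real.sqrt ((1-t^2)^d * C.det) * Real.exp e3)
      = (2 * Real.pi) ^ (-(d : ℝ) / 2) * C.det ^ (-(1 : ℝ) / 2)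
        * (((2 * Real.pi) ^ (-(d : ℝ) / 2) * Real.sqrt (2*Real.pi) ^ d)
          * (((1-t^2)^d * C.det) ^ (-(1 : ℝ) / 2) * Real.sqrt ((1-t^2)^d * C.det)))
        * (Real.exp k * Real.exp e3) from fun e3 => by ring]
    rw [f1, f2, ← Real.exp_add, hkdef]
    rw [mul_one, mul_one]
    congr 1
    congr 1
    field_simp
    ring

end Conv

/-- If a signed Gaussian mixture `ρ_tar = ∑ j, w_j G[a_j, C]` (common covariance, weights
summing to one but possibly negative) is strictly positive, then so are all intermediate
densities `ρ_t = ∑ j, w_j G[t a_j, C]` for `t ∈ [0,1]`. -/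
theorem intermediate_Gaussian_mixture_positive
    (d J : ℕ) (C : Matrix (Fin d) (Fin d) ℝ) (hC : C.PosDef)
    (a : Fin J → Fin d → ℝ) (w : Fin J → ℝ) (hw1 : ∑ j : Fin J, w j = 1)
    (hpos : ∀ x : Fin d → ℝ, 0 < ∑ j : Fin J, w j * gaussianDensity (a j) C x) :
    ∀ t ∈ Set.Icc (0 : ℝ) 1, ∀ x : Fin d → ℝ,
      0 < ∑ j : Fin J, w j * gaussianDensity (t • a j) C x := by
  
  intro t ht x
  rcases eq_or_lt_of_le ht.2 with h1 | h1
  · subst h1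
    simp only [one_smul]
    exact hpos x
  · have ht2 : t^2 < 1 := by nlinarith [ht.1]
    have hBpos : ((1 - t^2) • C).PosDef := posdef_smul hC (by nlinarith)
    set K : (Fin d → ℝ) → ℝ := fun u => gaussianDensity (t • u) ((1 - t^2) • C) x with hK
    have hconv : ∀ j : Fin J,
        Integrable (fun u : Fin d → ℝ => gaussianDensity (a j) C u * K u) ∧
        ∫ u : Fin d → ℝ, gaussianDensity (a j) C u * K u = gaussianDensity (t • a j) C x :=
      fun j => gaussian_conv hC (a j) x ht2
    have h1 : ∑ j : Fin J, w j * gaussianDensity (t • a j) C x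
        = ∫ u : Fin d → ℝ, ∑ j : Fin J, w j * (gaussianDensity (a j) C u * K u) := by
      calc ∑ j : Fin J, w j * gaussianDensity (t • a j) C x
          = ∑ j : Fin J, ∫ u : Fin d → ℝ, w j * (gaussianDensity (a j) C u * K u) := by
            refine Finset.sum_congr rfl fun j _ => ?_
            rw [MeasureTheory.integral_const_mul, (hconv j).2]
        _ = ∫ u : Fin d → ℝ, ∑ j : Fin J, w j * (gaussianDensity (a j) C u * K u) :=
            (integral_finset_sum _ (fun j _ => ((hconv j).1.const_mul (w j)))).symm
    rw [h1]
    have hfun : ∀ u : Fin d → ℝ, ∑ j : Fin J, w j * (gaussianDensity (a j) C u * K u)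
        = (∑ j : Fin J, w j * gaussianDensity (a j) C u) * K u := by
      intro u
      rw [Finset.sum_mul]
      exact Finset.sum_congr rfl fun j _ => by ring
    have hint : Integrable (fun u : Fin d → ℝ =>
        ∑ j : Fin J, w j * (gaussianDensity (a j) C u * K u)) :=
      integrable_finset_sum _ (fun j _ => ((hconv j).1.const_mul (w j)))
    have hnn : ∀ u : Fin d → ℝ, 0 ≤ ∑ j : Fin J, w j * (gaussianDensity (a j) C u * K u) := by
      intro u
      rw [hfun u]
      exact mul_nonneg (hpos u).le (gaussianDensity_pos hBpos _ _).le
    rw [MeasureTheory.integral_pos_iff_support_of_nonneg hnn hint]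
    have hsupp : Function.support (fun u : Fin d → ℝ =>
        ∑ j : Fin J, w j * (gaussianDensity (a j) C u * K u)) = Set.univ := by
      ext u
      simp only [Function.mem_support, Set.mem_univ, iff_true]
      rw [hfun u]
      exact (mul_pos (hpos u) (gaussianDensity_pos hBpos _ _)).ne'
    rw [hsupp]
    exact isOpen_univ.measure_pos volume ⟨0, trivial⟩
end
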